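/- Suppose u₁ < u₂ < ⋯ < u_k are points on 𝕃_0 and v₁, v₂, …, v_k are distinct points on 𝕃_n such that for each pair i ≠ j, the geodesics Γ_{u_i, v_i} and Γ_{u_j, v_j} do not coincide between the lines 𝕃_{n/3} and 𝕃_{2n/3}. Then there exists a subset I ⊂ {1, …, k} with |I| ≥ k^{1/8} such that the restrictions of the geodesics {Γ_{u_i, v_i}}_{i ∈ I} are pairwise disjoint either between the lines 𝕃_0 and 𝕃_{n/6}, or between 𝕃_{n/6} and 𝕃_{n/3}, or between 𝕃_{n/3} and 𝕃_{2n/3}, or between 𝕃_{2n/3} and 𝕃_n. -/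

import Mathlib

open MeasureTheory ProbabilityTheory Filter Set
open scoped ENNReal

namespace LPP

/-- A single up or right step on `ℤ²`. -/
def UpStep (u v : ℤ × ℤ) : Prop :=
  v = (u.1 + 1, u.2) ∨ v = (u.1, u.2 + 1)

/-- `p` is a finite up/right oriented path from `u` to `v`. -/
def IsPathFrom (p : List (ℤ × ℤ)) (u v : ℤ × ℤ) : Prop :=
  p.Chain' UpStep ∧ p.head? = some u ∧ p.getLast? = some v

/-- The passage time of a path: the total weight of its vertices, the last one excluded. -/
def pathWeight (ω : ℤ × ℤ → ℝ) (p : List (ℤ × ℤ)) : ℝ :=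
  (p.dropLast.map ω).sum

/-- The last passage time `T_{u,v}`. -/
noncomputable def lpTime (ω : ℤ × ℤ → ℝ) (u v : ℤ × ℤ) : ℝ :=
  sSup (pathWeight ω '' {p | IsPathFrom p u v})

/-- `p` is a geodesic from `u` to `v`. -/
def IsGeodesic (ω : ℤ × ℤ → ℝ) (u v : ℤ × ℤ) (p : List (ℤ × ℤ)) : Prop :=
  IsPathFrom p u v ∧ pathWeight ω p = lpTime ω u v

/-- The Exp(1) distribution on `ℝ`. -/
noncomputable def expMeasure : Measure ℝ :=
  (volume : Measure ℝ).withDensity (exponentialPDF 1)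

/-- The environment `ξ` is i.i.d. with Exp(1) marginals under `μ`. -/
def IsExpEnv {Ω : Type*} [MeasurableSpace Ω] (μ : Measure Ω) (ξ : ℤ × ℤ → Ω → ℝ) : Prop :=
  (∀ v, Measurable (ξ v)) ∧
    iIndepFun ξ μ ∧
    ∀ v, μ.map (ξ v) = expMeasure

/-- The weight configuration seen from a sample point. -/
def cfg {Ω : Type*} (ξ : ℤ × ℤ → Ω → ℝ) (ω : Ω) : ℤ × ℤ → ℝ := fun v => ξ v ω


/-- The lattice segment on the line `x + y = 0` with midpoint `(0,0)` and radius `r`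
(in the antidiagonal coordinate). -/
def segA (r : ℝ) : Set (ℤ × ℤ) :=
  {v | v.1 + v.2 = 0 ∧ |(v.1 : ℝ)| ≤ r}

/-- The lattice segment on the line `x + y = 2n` with midpoint `(n,n)` and radius `r`. -/
def segB (n : ℕ) (r : ℝ) : Set (ℤ × ℤ) :=
  {v | v.1 + v.2 = 2 * (n : ℤ) ∧ |(v.1 : ℝ) - (n : ℝ)| ≤ r}

/-- `A_n`: the segment of length `2n^{2/3}` on `𝕃_0` with midpoint `𝟎`. -/
def An (n : ℕ) : Set (ℤ × ℤ) := segA ((n : ℝ) ^ ((2 : ℝ) / 3))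

/-- `B_n`: the segment of length `2n^{2/3}` on `𝕃_n` with midpoint `(n,n)`. -/
def Bn (n : ℕ) : Set (ℤ × ℤ) := segB n ((n : ℝ) ^ ((2 : ℝ) / 3))

/-- The order along an antidiagonal line: `u < v` iff `v = u + i • (-1,1)` for some `i ≥ 1`. -/
def adLt (u v : ℤ × ℤ) : Prop :=
  ∃ i : ℕ, 0 < i ∧ v = (u.1 - (i : ℤ), u.2 + (i : ℤ))

/-- The portion of (the vertex set of) a path lying in the strip `a ≤ x + y ≤ b`. -/
def stripSet (p : List (ℤ × ℤ)) (a b : ℝ) : Set (ℤ × ℤ) :=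
  {w | w ∈ p ∧ a ≤ (w.1 : ℝ) + (w.2 : ℝ) ∧ (w.1 : ℝ) + (w.2 : ℝ) ≤ b}

namespace Aux

def z0 : ℤ × ℤ := (0, 0)

def lev (w : ℤ × ℤ) : ℤ := w.1 + w.2

theorem ne_nil {p : List (ℤ × ℤ)} {u v : ℤ × ℤ} (hp : IsPathFrom p u v) : p ≠ [] := by
  intro h; subst h; simp [IsPathFrom] at hp

theorem length_pos {p : List (ℤ × ℤ)} {u v : ℤ × ℤ} (hp : IsPathFrom p u v) : 0 < p.length :=
  List.length_pos_iff.2 (ne_nil hp)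

theorem getD_zero {p : List (ℤ × ℤ)} {u v : ℤ × ℤ} (hp : IsPathFrom p u v) :
    p.getD 0 z0 = u := by
  obtain ⟨-, h, -⟩ := hp
  cases p with
  | nil => simp at h
  | cons a t => simp at h; simp [h]

theorem getD_last {p : List (ℤ × ℤ)} {u v : ℤ × ℤ} (hp : IsPathFrom p u v) :
    p.getD (p.length - 1) z0 = v := by
  have h := hp.2.2
  have hl : p.length - 1 < p.length := by have := length_pos hp; omega
  rw [List.getLast?_eq_getElem?, List.getElem?_eq_getElem hl] at h
  rw [List.getD_eq_getElem _ _ hl]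
  exact Option.some_injective _ h

theorem step {p : List (ℤ × ℤ)} {u v : ℤ × ℤ} (hp : IsPathFrom p u v) {t : ℕ}
    (ht : t + 1 < p.length) : UpStep (p.getD t z0) (p.getD (t + 1) z0) := by
  have h := List.isChain_iff_getElem.1 hp.1 t (by omega)
  rw [List.getD_eq_getElem _ _ (by omega : t < p.length), List.getD_eq_getElem _ _ ht]
  simpa [List.get_eq_getElem] using h

theorem lev_getD {p : List (ℤ × ℤ)} {u v : ℤ × ℤ} (hp : IsPathFrom p u v) :
    ∀ t, t < p.length → lev (p.getD t z0) = lev u + t := by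
  intro t
  induction t with
  | zero => intro _; rw [getD_zero hp]; simp
  | succ s ih =>
    intro ht
    have hs := ih (by omega)
    rcases step hp ht with h | h <;> rw [h] <;>
      · simp only [lev] at hs ⊢
        push_cast
        omega

theorem x_step {p : List (ℤ × ℤ)} {u v : ℤ × ℤ} (hp : IsPathFrom p u v) {t : ℕ}
    (ht : t + 1 < p.length) :
    (p.getD (t + 1) z0).1 = (p.getD t z0).1 ∨ (p.getD (t + 1) z0).1 = (p.getD t z0).1 + 1 := by
  rcases step hp ht with h | h
  · exact Or.inr (by rw [h])
  · exact Or.inl (by rw [h])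

theorem y_step {p : List (ℤ × ℤ)} {u v : ℤ × ℤ} (hp : IsPathFrom p u v) {t : ℕ}
    (ht : t + 1 < p.length) :
    (p.getD (t + 1) z0).2 = (p.getD t z0).2 ∨ (p.getD (t + 1) z0).2 = (p.getD t z0).2 + 1 := by
  rcases step hp ht with h | h
  · exact Or.inl (by rw [h])
  · exact Or.inr (by rw [h])

theorem fst_mono {p : List (ℤ × ℤ)} {u v : ℤ × ℤ} (hp : IsPathFrom p u v) :
    ∀ t, t < p.length → ∀ s, s ≤ t → (p.getD s z0).1 ≤ (p.getD t z0).1 := by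
  intro t
  induction t with
  | zero => intro _ s hs; have : s = 0 := by omega
            subst this; exact le_refl _
  | succ r ih =>
    intro ht s hs
    by_cases hs' : s = r + 1
    · subst hs'; exact le_refl _
    · have h1 := ih (by omega) s (by omega)
      rcases x_step hp (t := r) ht with h | h <;> omega

theorem snd_mono {p : List (ℤ × ℤ)} {u v : ℤ × ℤ} (hp : IsPathFrom p u v) :
    ∀ t, t < p.length → ∀ s, s ≤ t → (p.getD s z0).2 ≤ (p.getD t z0).2 := by
  intro t
  induction t with
  | zero => intro _ s hs; have : s = 0 := by omega
            subst this; exact le_refl _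
  | succ r ih =>
    intro ht s hs
    by_cases hs' : s = r + 1
    · subst hs'; exact le_refl _
    · have h1 := ih (by omega) s (by omega)
      rcases y_step hp (t := r) ht with h | h <;> omega

theorem mem_iff_getD {p : List (ℤ × ℤ)} {w : ℤ × ℤ} :
    w ∈ p ↔ ∃ t, t < p.length ∧ p.getD t z0 = w := by
  rw [List.mem_iff_getElem]
  constructor
  · rintro ⟨t, ht, rfl⟩; exact ⟨t, ht, List.getD_eq_getElem _ _ ht⟩
  · rintro ⟨t, ht, h⟩; exact ⟨t, ht, by rw [← List.getD_eq_getElem _ _ ht, h]⟩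

theorem nodup {p : List (ℤ × ℤ)} {u v : ℤ × ℤ} (hp : IsPathFrom p u v) : p.Nodup := by
  rw [List.nodup_iff_injective_get]
  intro a b hab
  have h1 : p.getD a.1 z0 = p.getD b.1 z0 := by
    rw [List.getD_eq_getElem _ _ a.2, List.getD_eq_getElem _ _ b.2]
    simpa [List.get_eq_getElem] using hab
  have h2 := lev_getD hp a.1 a.2
  have h3 := lev_getD hp b.1 b.2
  rw [h1] at h2
  apply Fin.ext
  omega

theorem pathWeight_le (om : ℤ × ℤ → ℝ) {p : List (ℤ × ℤ)} {u v : ℤ × ℤ}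
    (hp : IsPathFrom p u v) :
    pathWeight om p ≤ ∑ w ∈ Finset.Icc u v, max (om w) 0 := by
  have hnd : p.dropLast.Nodup := (nodup hp).sublist (List.dropLast_sublist p)
  have hsub : p.dropLast.toFinset ⊆ Finset.Icc u v := by
    intro w hw
    rw [List.mem_toFinset] at hw
    have hwp : w ∈ p := (List.dropLast_sublist p).subset hw
    obtain ⟨t, ht, rfl⟩ := mem_iff_getD.1 hwp
    rw [Finset.mem_Icc]
    constructor
    · rw [← getD_zero hp, Prod.le_def]
      exact ⟨fst_mono hp t ht 0 (Nat.zero_le _), snd_mono hp t ht 0 (Nat.zero_le _)⟩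
    · rw [← getD_last hp, Prod.le_def]
      have h1 : p.length - 1 < p.length := by have := length_pos hp; omega
      exact ⟨fst_mono hp _ h1 t (by omega), snd_mono hp _ h1 t (by omega)⟩
  calc pathWeight om p = ∑ w ∈ p.dropLast.toFinset, om w := by
        rw [pathWeight]; exact (List.sum_toFinset om hnd).symm
    _ ≤ ∑ w ∈ p.dropLast.toFinset, max (om w) 0 :=
        Finset.sum_le_sum (fun w _ => le_max_left _ _)
    _ ≤ ∑ w ∈ Finset.Icc u v, max (om w) 0 :=
        Finset.sum_le_sum_of_subset_of_nonneg hsub (fun w _ _ => le_max_right _ _)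

theorem le_lpTime (om : ℤ × ℤ → ℝ) {q : List (ℤ × ℤ)} {u v : ℤ × ℤ}
    (hq : IsPathFrom q u v) : pathWeight om q ≤ lpTime om u v := by
  apply le_csSup
  · exact ⟨∑ w ∈ Finset.Icc u v, max (om w) 0, by rintro x ⟨r, hr, rfl⟩; exact pathWeight_le om hr⟩
  · exact ⟨q, hq, rfl⟩

theorem head?_eq_getD {l : List (ℤ × ℤ)} (h : l ≠ []) : l.head? = some (l.getD 0 z0) := by
  cases l with
  | nil => exact absurd rfl h
  | cons a t => simp

theorem getLast?_eq_getD {l : List (ℤ × ℤ)} (h : l ≠ []) :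
    l.getLast? = some (l.getD (l.length - 1) z0) := by
  have h0 : 0 < l.length := List.length_pos_iff.2 h
  have hl : l.length - 1 < l.length := by omega
  rw [List.getLast?_eq_getElem?, List.getElem?_eq_getElem hl, List.getD_eq_getElem _ _ hl]

theorem dropLast_head? {l : List (ℤ × ℤ)} (h : l.dropLast ≠ []) : l.dropLast.head? = l.head? := by
  cases l with
  | nil => simp at h
  | cons a t =>
    cases t with
    | nil => simp at h
    | cons b s => simp

theorem glue (om : ℤ × ℤ → ℝ) {l1 l2 : List (ℤ × ℤ)} {u w v : ℤ × ℤ}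
    (h1 : IsPathFrom l1 u w) (h2 : IsPathFrom l2 w v) :
    IsPathFrom (l1.dropLast ++ l2) u v ∧
      pathWeight om (l1.dropLast ++ l2) = pathWeight om l1 + pathWeight om l2 := by
  have h2n : l2 ≠ [] := ne_nil h2
  have hwl1 : w ∈ l1.getLast? := by rw [h1.2.2]; rfl
  have hl1 : l1.dropLast ++ [w] = l1 := List.dropLast_append_getLast? w hwl1
  have hch : List.Chain' UpStep (l1.dropLast ++ [w]) := by rw [hl1]; exact h1.1
  obtain ⟨hc1, -, hcj⟩ := List.isChain_append.1 hch
  refine ⟨⟨?_, ?_, ?_⟩, ?_⟩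
  · refine List.isChain_append.2 ⟨hc1, h2.1, ?_⟩
    intro x hx y hy
    have hyw : some w = some y := by rw [← h2.2.1]; exact Option.mem_def.1 hy
    obtain rfl : w = y := Option.some_injective _ hyw
    exact hcj x hx w rfl
  · by_cases hd : l1.dropLast = []
    · rw [hd, List.nil_append]
      have hu : u = w := by
        cases l1 with
        | nil => exact absurd rfl (ne_nil h1)
        | cons a t =>
          cases t with
          | nil =>
            have e1 := h1.2.1
            have e2 := h1.2.2
            simp at e1 e2
            rw [← e1, e2]
          | cons b s => simp at hd
      rw [h2.2.1, hu]
    · rw [List.head?_append_of_ne_nil _ hd, dropLast_head? hd, h1.2.1]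
  · rw [List.getLast?_append_of_ne_nil _ h2n, h2.2.2]
  · rw [pathWeight, List.dropLast_append_of_ne_nil h2n, List.map_append, List.sum_append]
    rfl

theorem split (om : ℤ × ℤ → ℝ) {p : List (ℤ × ℤ)} {u v : ℤ × ℤ} (hp : IsPathFrom p u v)
    {a : ℕ} (ha : a < p.length) :
    IsPathFrom (p.take (a + 1)) u (p.getD a z0) ∧ IsPathFrom (p.drop a) (p.getD a z0) v ∧
      pathWeight om p = pathWeight om (p.take (a + 1)) + pathWeight om (p.drop a) := by
  have hpn : p ≠ [] := ne_nil hp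
  have htn : p.take (a + 1) ≠ [] := by
    intro h
    have h2 : (p.take (a + 1)).length = 0 := by rw [h]; rfl
    rw [List.length_take] at h2
    omega
  have hdn : p.drop a ≠ [] := by
    intro h
    have h2 : (p.drop a).length = 0 := by rw [h]; rfl
    rw [List.length_drop] at h2
    omega
  have hlt : (p.take (a + 1)).length = a + 1 := by rw [List.length_take]; omega
  have hld : (p.drop a).length = p.length - a := by simp
  have htake_last : (p.take (a + 1)).getD a z0 = p.getD a z0 := by
    rw [List.getD_eq_getElem _ _ (by omega), List.getD_eq_getElem _ _ ha]
    simp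
  have hdrop_get : ∀ s, s < p.length - a → (p.drop a).getD s z0 = p.getD (a + s) z0 := by
    intro s hs
    rw [List.getD_eq_getElem _ _ (by rw [hld]; omega),
      List.getD_eq_getElem _ _ (by omega : a + s < p.length)]
    simp
  refine ⟨⟨hp.1.prefix (List.take_prefix _ _), ?_, ?_⟩, ⟨hp.1.suffix (List.drop_suffix _ _), ?_, ?_⟩, ?_⟩
  · rw [head?_eq_getD htn, ← hp.2.1, head?_eq_getD hpn]
    congr 1
    rw [List.getD_eq_getElem _ _ (by rw [hlt]; omega), List.getD_eq_getElem _ _ (length_pos hp)]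
    simp
  · rw [getLast?_eq_getD htn, hlt]
    simp [htake_last]
  · rw [head?_eq_getD hdn, hdrop_get 0 (by omega)]
    norm_num
  · rw [getLast?_eq_getD hdn, hld, hdrop_get _ (by omega), ← getD_last hp]
    congr 2
    omega
  · have hsplit : p.dropLast = p.take a ++ (p.drop a).dropLast := by
      conv_lhs => rw [← List.take_append_drop a p]
      rw [List.dropLast_append_of_ne_nil hdn]
    have htake1 : p.take (a + 1) = p.take a ++ [p.getD a z0] := by
      rw [List.take_succ, List.getElem?_eq_getElem ha, List.getD_eq_getElem _ _ ha]
      rfl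
    have h1 : pathWeight om (p.take (a + 1)) = (List.map om (p.take a)).sum := by
      rw [pathWeight, htake1, List.dropLast_concat]
    rw [pathWeight, hsplit, List.map_append, List.sum_append, h1]
    rfl

theorem getD_drop (l : List (ℤ × ℤ)) (a s : ℕ) :
    (l.drop a).getD s z0 = l.getD (a + s) z0 := by
  simp [List.getD_eq_getElem?_getD, List.getElem?_drop]

theorem getD_take (l : List (ℤ × ℤ)) {n m : ℕ} (h : m < n) :
    (l.take n).getD m z0 = l.getD m z0 := by
  simp [List.getD_eq_getElem?_getD, List.getElem?_take_of_lt h]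

theorem subgeo (om : ℤ × ℤ → ℝ)
    (huniq : ∀ u v : ℤ × ℤ, u.1 ≤ v.1 → u.2 ≤ v.2 → ∃! q, IsGeodesic om u v q)
    {p : List (ℤ × ℤ)} {u v : ℤ × ℤ} (hg : IsGeodesic om u v p)
    {a b : ℕ} (hab : a ≤ b) (hb : b < p.length) :
    IsGeodesic om (p.getD a z0) (p.getD b z0) ((p.drop a).take (b - a + 1)) := by
  have hp := hg.1
  have ha : a < p.length := by omega
  obtain ⟨h1, h2, hw⟩ := split om hp ha
  have hba : b - a < (p.drop a).length := by rw [List.length_drop]; omega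
  obtain ⟨h3, h4, hw2⟩ := split om h2 hba
  have hpt : (p.drop a).getD (b - a) z0 = p.getD b z0 := by
    rw [getD_drop]
    congr 1
    omega
  rw [hpt] at h3 h4
  have hfst := fst_mono hp b hb a hab
  have hsnd := snd_mono hp b hb a hab
  obtain ⟨g, hgg, hgun⟩ := huniq _ _ hfst hsnd
  refine ⟨h3, le_antisymm (le_lpTime om h3) ?_⟩
  by_contra hlt
  push_neg at hlt
  have hgw : pathWeight om g = lpTime om (p.getD a z0) (p.getD b z0) := hgg.2
  obtain ⟨hq1, hq1w⟩ := glue om h1 hgg.1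
  obtain ⟨hq2, hq2w⟩ := glue om hq1 h4
  have hle := le_lpTime om hq2
  rw [hq2w, hq1w] at hle
  have hpw : pathWeight om p = lpTime om u v := hg.2
  rw [hw, hw2] at hpw
  rw [← hgw] at hlt
  linarith

theorem coincide (om : ℤ × ℤ → ℝ)
    (huniq : ∀ u v : ℤ × ℤ, u.1 ≤ v.1 → u.2 ≤ v.2 → ∃! q, IsGeodesic om u v q)
    {u v u' v' : ℤ × ℤ} {p p' : List (ℤ × ℤ)}
    (hgi : IsGeodesic om u v p) (hgj : IsGeodesic om u' v' p')
    {a b : ℕ} (hab : a ≤ b) (hb : b < p.length) (hb' : b < p'.length)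
    (hA : p.getD a z0 = p'.getD a z0) (hB : p.getD b z0 = p'.getD b z0) :
    ∀ t, a ≤ t → t ≤ b → p.getD t z0 = p'.getD t z0 := by
  have s1 := subgeo om huniq hgi hab hb
  have s2 := subgeo om huniq hgj hab hb'
  rw [← hA, ← hB] at s2
  have hfst := fst_mono hgi.1 b hb a hab
  have hsnd := snd_mono hgi.1 b hb a hab
  obtain ⟨g, -, hgun⟩ := huniq _ _ hfst hsnd
  have e := (hgun _ s1).trans (hgun _ s2).symm
  intro t hta htb
  have e1 : ((p.drop a).take (b - a + 1)).getD (t - a) z0 = p.getD t z0 := by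
    rw [getD_take _ (by omega), getD_drop]
    congr 1
    omega
  have e2 : ((p'.drop a).take (b - a + 1)).getD (t - a) z0 = p'.getD t z0 := by
    rw [getD_take _ (by omega), getD_drop]
    congr 1
    omega
  rw [← e1, ← e2, e]

theorem ivt : ∀ (b : ℕ) (d : ℕ → ℤ) (a : ℕ), a ≤ b →
    (∀ t, a ≤ t → t < b → d (t + 1) - d t = 0 ∨ d (t + 1) - d t = 1 ∨ d (t + 1) - d t = -1) →
    0 < d a → d b ≤ 0 → ∃ c, a ≤ c ∧ c ≤ b ∧ d c = 0 := by
  intro b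
  induction b with
  | zero =>
    intro d a hab _ ha hb
    have : a = 0 := by omega
    subst this
    exact absurd hb (not_le.2 ha)
  | succ m ih =>
    intro d a hab hstep ha hb
    by_cases hm : a = m + 1
    · subst hm
      exact absurd hb (not_le.2 ha)
    · have ham : a ≤ m := by omega
      by_cases h : d m ≤ 0
      · obtain ⟨c, h1, h2, h3⟩ := ih d a ham (fun t h1 h2 => hstep t h1 (by omega)) ha h
        exact ⟨c, h1, by omega, h3⟩
      · rcases hstep m ham (by omega) with h' | h' | h' <;>
          exact ⟨m + 1, by omega, le_refl _, by omega⟩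

theorem ivt' (d : ℕ → ℤ) (a b : ℕ) (hab : a ≤ b)
    (hstep : ∀ t, a ≤ t → t < b → d (t + 1) - d t = 0 ∨ d (t + 1) - d t = 1 ∨ d (t + 1) - d t = -1)
    (ha : d a < 0) (hb : 0 ≤ d b) : ∃ c, a ≤ c ∧ c ≤ b ∧ d c = 0 := by
  obtain ⟨c, h1, h2, h3⟩ := ivt b (fun t => -d t) a hab
    (fun t ht1 ht2 => by
      show -d (t + 1) - -d t = 0 ∨ -d (t + 1) - -d t = 1 ∨ -d (t + 1) - -d t = -1
      rcases hstep t ht1 ht2 with h | h | h <;> omega)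
    (by show (0:ℤ) < -d a; omega) (by show -d b ≤ 0; omega)
  have h3' : -d c = 0 := h3
  exact ⟨c, h1, h2, by omega⟩

theorem two_trans {k : ℕ} (A : Finset (Fin k)) (P Q : Fin k → Fin k → Prop)
    (hP : ∀ i j l, i ∈ A → j ∈ A → l ∈ A → i < j → j < l → P i j → P j l → P i l)
    (hQ : ∀ i j l, i ∈ A → j ∈ A → l ∈ A → i < j → j < l → Q i j → Q j l → Q i l)
    (hcov : ∀ i j, i ∈ A → j ∈ A → i < j → P i j ∨ Q i j) :
    ∃ B ⊆ A, A.card ≤ B.card * B.card ∧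
      ((∀ i ∈ B, ∀ j ∈ B, i < j → P i j) ∨ (∀ i ∈ B, ∀ j ∈ B, i < j → Q i j)) := by
  classical
  rcases A.eq_empty_or_nonempty with rfl | hA
  · exact ⟨∅, Finset.Subset.refl _, by simp, Or.inl (by simp)⟩
  set chP : Fin k → Finset (Finset (Fin k)) := fun i =>
    A.powerset.filter (fun B => i ∈ B ∧ (∀ j ∈ B, j ≤ i) ∧
      ∀ x ∈ B, ∀ y ∈ B, x < y → P x y) with hchP
  set chQ : Fin k → Finset (Finset (Fin k)) := fun i =>
    A.powerset.filter (fun B => i ∈ B ∧ (∀ j ∈ B, j ≤ i) ∧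
      ∀ x ∈ B, ∀ y ∈ B, x < y → Q x y) with hchQ
  set f : Fin k → ℕ := fun i => (chP i).sup Finset.card with hf
  set g : Fin k → ℕ := fun i => (chQ i).sup Finset.card with hg
  have hsingleP : ∀ i ∈ A, {i} ∈ chP i := by
    intro i hi
    rw [hchP]
    simp only [Finset.mem_filter, Finset.mem_powerset]
    refine ⟨Finset.singleton_subset_iff.2 hi, Finset.mem_singleton_self i, ?_, ?_⟩
    · intro j hj; rw [Finset.mem_singleton] at hj; exact le_of_eq hj
    · intro x hx y hy hxy
      rw [Finset.mem_singleton] at hx hy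
      subst hx; subst hy
      exact absurd hxy (lt_irrefl _)
  have hsingleQ : ∀ i ∈ A, {i} ∈ chQ i := by
    intro i hi
    rw [hchQ]
    simp only [Finset.mem_filter, Finset.mem_powerset]
    refine ⟨Finset.singleton_subset_iff.2 hi, Finset.mem_singleton_self i, ?_, ?_⟩
    · intro j hj; rw [Finset.mem_singleton] at hj; exact le_of_eq hj
    · intro x hx y hy hxy
      rw [Finset.mem_singleton] at hx hy
      subst hx; subst hy
      exact absurd hxy (lt_irrefl _)
  have honeP : ∀ i ∈ A, 1 ≤ f i := by
    intro i hi
    have h1 : ({i} : Finset (Fin k)).card ≤ f i := Finset.le_sup (hsingleP i hi)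
    rw [Finset.card_singleton] at h1
    exact h1
  have honeQ : ∀ i ∈ A, 1 ≤ g i := by
    intro i hi
    have h1 : ({i} : Finset (Fin k)).card ≤ g i := Finset.le_sup (hsingleQ i hi)
    rw [Finset.card_singleton] at h1
    exact h1
  have hattainP : ∀ i ∈ A, ∃ B ∈ chP i, B.card = f i := by
    intro i hi
    obtain ⟨B, hB, hBe⟩ := Finset.exists_mem_eq_sup (chP i) ⟨{i}, hsingleP i hi⟩ Finset.card
    exact ⟨B, hB, hBe.symm⟩
  have hattainQ : ∀ i ∈ A, ∃ B ∈ chQ i, B.card = g i := by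
    intro i hi
    obtain ⟨B, hB, hBe⟩ := Finset.exists_mem_eq_sup (chQ i) ⟨{i}, hsingleQ i hi⟩ Finset.card
    exact ⟨B, hB, hBe.symm⟩
  have hfmono : ∀ i j, i ∈ A → j ∈ A → i < j → P i j → f i < f j := by
    intro i j hiA hjA hij hPij
    obtain ⟨B, hBmem, hBcard⟩ := hattainP i hiA
    rw [hchP] at hBmem
    simp only [Finset.mem_filter, Finset.mem_powerset] at hBmem
    obtain ⟨hBA, hiB, hBle, hBchain⟩ := hBmem
    have hjB : j ∉ B := fun h => absurd (hBle j h) (not_le.2 hij)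
    have hmem : insert j B ∈ chP j := by
      rw [hchP]
      simp only [Finset.mem_filter, Finset.mem_powerset]
      refine ⟨Finset.insert_subset hjA hBA, Finset.mem_insert_self _ _, ?_, ?_⟩
      · intro x hx
        rcases Finset.mem_insert.1 hx with rfl | hx
        · exact le_refl _
        · exact le_of_lt (lt_of_le_of_lt (hBle x hx) hij)
      · intro x hx y hy hxy
        rcases Finset.mem_insert.1 hy with hyj | hyB
        · subst hyj
          rcases Finset.mem_insert.1 hx with hxj | hxB
          · subst hxj; exact absurd hxy (lt_irrefl _)
          · rcases eq_or_lt_of_le (hBle x hxB) with hxi | hxi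
            · subst hxi; exact hPij
            · exact hP x i y (hBA hxB) hiA hjA hxi hij (hBchain x hxB i hiB hxi) hPij
        · rcases Finset.mem_insert.1 hx with hxj | hxB
          · subst hxj
            exact absurd hxy (not_lt.2 (le_of_lt (lt_of_le_of_lt (hBle y hyB) hij)))
          · exact hBchain x hxB y hyB hxy
    have hle : (insert j B).card ≤ f j := Finset.le_sup (f := Finset.card) hmem
    rw [Finset.card_insert_of_notMem hjB] at hle
    omega
  have hgmono : ∀ i j, i ∈ A → j ∈ A → i < j → Q i j → g i < g j := by
    intro i j hiA hjA hij hQij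
    obtain ⟨B, hBmem, hBcard⟩ := hattainQ i hiA
    rw [hchQ] at hBmem
    simp only [Finset.mem_filter, Finset.mem_powerset] at hBmem
    obtain ⟨hBA, hiB, hBle, hBchain⟩ := hBmem
    have hjB : j ∉ B := fun h => absurd (hBle j h) (not_le.2 hij)
    have hmem : insert j B ∈ chQ j := by
      rw [hchQ]
      simp only [Finset.mem_filter, Finset.mem_powerset]
      refine ⟨Finset.insert_subset hjA hBA, Finset.mem_insert_self _ _, ?_, ?_⟩
      · intro x hx
        rcases Finset.mem_insert.1 hx with rfl | hx
        · exact le_refl _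
        · exact le_of_lt (lt_of_le_of_lt (hBle x hx) hij)
      · intro x hx y hy hxy
        rcases Finset.mem_insert.1 hy with hyj | hyB
        · subst hyj
          rcases Finset.mem_insert.1 hx with hxj | hxB
          · subst hxj; exact absurd hxy (lt_irrefl _)
          · rcases eq_or_lt_of_le (hBle x hxB) with hxi | hxi
            · subst hxi; exact hQij
            · exact hQ x i y (hBA hxB) hiA hjA hxi hij (hBchain x hxB i hiB hxi) hQij
        · rcases Finset.mem_insert.1 hx with hxj | hxB
          · subst hxj
            exact absurd hxy (not_lt.2 (le_of_lt (lt_of_le_of_lt (hBle y hyB) hij)))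
          · exact hBchain x hxB y hyB hxy
    have hle : (insert j B).card ≤ g j := Finset.le_sup (f := Finset.card) hmem
    rw [Finset.card_insert_of_notMem hjB] at hle
    omega
  set F := A.sup f with hF
  set G := A.sup g with hG
  have hinj : Set.InjOn (fun i => (f i, g i)) A := by
    intro i hi j hj hEq
    by_contra hne
    have hne' : i ≠ j := hne
    rcases lt_or_gt_of_ne hne' with h | h
    · rcases hcov i j hi hj h with hp | hq
      · exact absurd (congrArg Prod.fst hEq) (ne_of_lt (hfmono i j hi hj h hp))
      · exact absurd (congrArg Prod.snd hEq) (ne_of_lt (hgmono i j hi hj h hq))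
    · rcases hcov j i hj hi h with hp | hq
      · exact absurd (congrArg Prod.fst hEq).symm (ne_of_lt (hfmono j i hj hi h hp))
      · exact absurd (congrArg Prod.snd hEq).symm (ne_of_lt (hgmono j i hj hi h hq))
  have hcard : A.card ≤ F * G := by
    have himg : A.image (fun i => (f i, g i)) ⊆ Finset.Icc 1 F ×ˢ Finset.Icc 1 G := by
      intro x hx
      rw [Finset.mem_image] at hx
      obtain ⟨i, hi, rfl⟩ := hx
      simp only [Finset.mem_product, Finset.mem_Icc]
      refine ⟨⟨honeP i hi, ?_⟩, ⟨honeQ i hi, ?_⟩⟩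
      · show f i ≤ F
        exact Finset.le_sup hi
      · show g i ≤ G
        exact Finset.le_sup hi
    calc A.card = (A.image (fun i => (f i, g i))).card :=
          (Finset.card_image_of_injOn hinj).symm
      _ ≤ (Finset.Icc 1 F ×ˢ Finset.Icc 1 G).card := Finset.card_le_card himg
      _ = F * G := by rw [Finset.card_product, Nat.card_Icc, Nat.card_Icc]; simp
  obtain ⟨iF, hiF, hFval⟩ := Finset.exists_mem_eq_sup A hA f
  obtain ⟨iG, hiG, hGval⟩ := Finset.exists_mem_eq_sup A hA g
  obtain ⟨BP, hBPmem, hBPcard⟩ := hattainP iF hiF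
  obtain ⟨BQ, hBQmem, hBQcard⟩ := hattainQ iG hiG
  rw [hchP] at hBPmem
  simp only [Finset.mem_filter, Finset.mem_powerset] at hBPmem
  rw [hchQ] at hBQmem
  simp only [Finset.mem_filter, Finset.mem_powerset] at hBQmem
  rcases le_total G F with hle | hle
  · refine ⟨BP, hBPmem.1, ?_, Or.inl (fun x hx y hy hxy => hBPmem.2.2.2 x hx y hy hxy)⟩
    have h1 : BP.card = F := by rw [hBPcard, hF, hFval]
    calc A.card ≤ F * G := hcard
      _ ≤ F * F := Nat.mul_le_mul_left F hle
      _ = BP.card * BP.card := by rw [h1]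
  · refine ⟨BQ, hBQmem.1, ?_, Or.inr (fun x hx y hy hxy => hBQmem.2.2.2 x hx y hy hxy)⟩
    have h1 : BQ.card = G := by rw [hBQcard, hG, hGval]
    calc A.card ≤ F * G := hcard
      _ ≤ G * G := Nat.mul_le_mul_right G hle
      _ = BQ.card * BQ.card := by rw [h1]

end Aux

/-- **Lemma 2.8 (Erdős–Szekeres ordering lemma).** Suppose geodesics are unique, `u₁ < ⋯ < u_k`
lie on `𝕃_0`, `v₁, …, v_k` are distinct points on `𝕃_n`, and the geodesics `Γ_{u_i,v_i}`
pairwise do not coincide between `𝕃_{n/3}` and `𝕃_{2n/3}`. Then at least `k^{1/8}` of them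
are pairwise disjoint in one of the four strips `𝕃_0`–`𝕃_{n/6}`, `𝕃_{n/6}`–`𝕃_{n/3}`,
`𝕃_{n/3}`–`𝕃_{2n/3}`, `𝕃_{2n/3}`–`𝕃_n`. -/


theorem ordering_lemma (om : ℤ × ℤ → ℝ)
    (huniq : ∀ u v : ℤ × ℤ, u.1 ≤ v.1 → u.2 ≤ v.2 → ∃! p, IsGeodesic om u v p)
    (n k : ℕ) (u v : Fin k → ℤ × ℤ) (p : Fin k → List (ℤ × ℤ))
    (hu : ∀ i, (u i).1 + (u i).2 = 0)
    (huord : ∀ i j, i < j → adLt (u i) (u j))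
    (hv : ∀ i, (v i).1 + (v i).2 = 2 * (n : ℤ))
    (hvinj : Function.Injective v)
    (hgeo : ∀ i, IsGeodesic om (u i) (v i) (p i))
    (hdiff : ∀ i j, i ≠ j →
      stripSet (p i) (2 * (n : ℝ) / 3) (4 * (n : ℝ) / 3) ≠
        stripSet (p j) (2 * (n : ℝ) / 3) (4 * (n : ℝ) / 3)) :
    ∃ I : Finset (Fin k), (k : ℝ) ^ ((1 : ℝ) / 8) ≤ (I.card : ℝ) ∧
      ∃ a b : ℝ,
        ((a, b) = (0, (n : ℝ) / 3) ∨ (a, b) = ((n : ℝ) / 3, 2 * (n : ℝ) / 3) ∨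
          (a, b) = (2 * (n : ℝ) / 3, 4 * (n : ℝ) / 3) ∨ (a, b) = (4 * (n : ℝ) / 3, 2 * (n : ℝ))) ∧
        ∀ i ∈ I, ∀ j ∈ I, i ≠ j → Disjoint (stripSet (p i) a b) (stripSet (p j) a b) := by
  classical
  have hgeoP : ∀ i, IsPathFrom (p i) (u i) (v i) := fun i => (hgeo i).1
  have hlev0 : ∀ i, Aux.lev (u i) = 0 := fun i => hu i
  have hlev2 : ∀ i, Aux.lev (v i) = 2 * (n : ℤ) := fun i => hv i
  have hlen : ∀ i, (p i).length = 2 * n + 1 := by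
    intro i
    have h3 := Aux.length_pos (hgeoP i)
    have h1 := Aux.lev_getD (hgeoP i) ((p i).length - 1) (by omega)
    rw [Aux.getD_last (hgeoP i), hlev2 i, hlev0 i] at h1
    omega
  set X : Fin k → ℕ → ℤ := fun i t => ((p i).getD t Aux.z0).1 with hX
  have hlev : ∀ i t, t ≤ 2 * n → Aux.lev ((p i).getD t Aux.z0) = (t : ℤ) := by
    intro i t ht
    rw [Aux.lev_getD (hgeoP i) t (by rw [hlen i]; omega), hlev0 i]
    omega
  have hXeq : ∀ i j t, t ≤ 2 * n → X i t = X j t →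
      (p i).getD t Aux.z0 = (p j).getD t Aux.z0 := by
    intro i j t ht hx
    have hx' : ((p i).getD t Aux.z0).1 = ((p j).getD t Aux.z0).1 := hx
    have h1 := hlev i t ht
    have h2 := hlev j t ht
    simp only [Aux.lev] at h1 h2
    have h3 : ((p i).getD t Aux.z0).2 = ((p j).getD t Aux.z0).2 := by omega
    exact Prod.ext hx' h3
  have hX0 : ∀ i, X i 0 = (u i).1 := by
    intro i
    show ((p i).getD 0 Aux.z0).1 = (u i).1
    rw [Aux.getD_zero (hgeoP i)]
  have hX2n : ∀ i, X i (2 * n) = (v i).1 := by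
    intro i
    show ((p i).getD (2 * n) Aux.z0).1 = (v i).1
    have h1 := Aux.getD_last (hgeoP i)
    rw [hlen i] at h1
    simp only [Nat.add_sub_cancel] at h1
    rw [h1]
  have hstepX : ∀ i t, t < 2 * n → X i (t + 1) = X i t ∨ X i (t + 1) = X i t + 1 :=
    fun i t ht => Aux.x_step (hgeoP i) (by rw [hlen i]; omega)
  have hu_lt : ∀ i j : Fin k, i < j → X j 0 < X i 0 := by
    intro i j hij
    obtain ⟨m, hm, he⟩ := huord i j hij
    rw [hX0, hX0, he]
    show (u i).1 - (m : ℤ) < (u i).1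
    omega
  have hv_ne : ∀ i j : Fin k, i ≠ j → (v i).1 ≠ (v j).1 := by
    intro i j hij he
    apply hij
    apply hvinj
    have h1 := hv i
    have h2 := hv j
    exact Prod.ext he (by omega)
  have cross : ∀ (i j : Fin k) (t1 t2 : ℕ), t1 ≤ t2 → t2 ≤ 2 * n →
      0 < X i t1 - X j t1 → X i t2 - X j t2 ≤ 0 →
      ∃ c, t1 ≤ c ∧ c ≤ t2 ∧ X i c = X j c := by
    intro i j t1 t2 h12 h2n hpos hneg
    obtain ⟨c, hc1, hc2, hc3⟩ := Aux.ivt t2 (fun t => X i t - X j t) t1 h12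
      (fun t ht1 ht2 => by
        show X i (t + 1) - X j (t + 1) - (X i t - X j t) = 0 ∨
          X i (t + 1) - X j (t + 1) - (X i t - X j t) = 1 ∨
          X i (t + 1) - X j (t + 1) - (X i t - X j t) = -1
        rcases hstepX i t (by omega) with h | h <;> rcases hstepX j t (by omega) with h' | h' <;>
          omega)
      hpos hneg
    have hc3' : X i c - X j c = 0 := hc3
    exact ⟨c, hc1, hc2, by omega⟩
  have cross' : ∀ (i j : Fin k) (t1 t2 : ℕ), t1 ≤ t2 → t2 ≤ 2 * n →
      X i t1 - X j t1 < 0 → 0 ≤ X i t2 - X j t2 →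
      ∃ c, t1 ≤ c ∧ c ≤ t2 ∧ X i c = X j c := by
    intro i j t1 t2 h12 h2n hneg hpos
    obtain ⟨c, hc1, hc2, hc3⟩ := Aux.ivt' (fun t => X i t - X j t) t1 t2 h12
      (fun t ht1 ht2 => by
        show X i (t + 1) - X j (t + 1) - (X i t - X j t) = 0 ∨
          X i (t + 1) - X j (t + 1) - (X i t - X j t) = 1 ∨
          X i (t + 1) - X j (t + 1) - (X i t - X j t) = -1
        rcases hstepX i t (by omega) with h | h <;> rcases hstepX j t (by omega) with h' | h' <;>
          omega)
      hneg hpos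
    have hc3' : X i c - X j c = 0 := hc3
    exact ⟨c, hc1, hc2, by omega⟩
  have hdich : ∀ i j : Fin k, i ≠ j →
      (∀ t, t ≤ 2 * n → (t : ℝ) ≤ 2 * (n : ℝ) / 3 → X i t ≠ X j t) ∨
      (∀ t, t ≤ 2 * n → 4 * (n : ℝ) / 3 ≤ (t : ℝ) → X i t ≠ X j t) := by
    intro i j hne
    by_contra hcon
    push_neg at hcon
    obtain ⟨⟨t1, ht1n, ht1r, ht1x⟩, ⟨t2, ht2n, ht2r, ht2x⟩⟩ := hcon
    have hnn : (0 : ℝ) ≤ (n : ℝ) := Nat.cast_nonneg n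
    have ht12 : t1 ≤ t2 := by
      have h : (t1 : ℝ) ≤ (t2 : ℝ) := by linarith
      exact_mod_cast h
    have hco := Aux.coincide om huniq (hgeo i) (hgeo j) ht12
      (by rw [hlen i]; omega) (by rw [hlen j]; omega)
      (hXeq i j t1 ht1n ht1x) (hXeq i j t2 ht2n ht2x)
    apply hdiff i j hne
    have key : ∀ (a b : Fin k),
        (∀ t, t1 ≤ t → t ≤ t2 → (p a).getD t Aux.z0 = (p b).getD t Aux.z0) →
        ∀ w, w ∈ stripSet (p a) (2 * (n : ℝ) / 3) (4 * (n : ℝ) / 3) →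
          w ∈ stripSet (p b) (2 * (n : ℝ) / 3) (4 * (n : ℝ) / 3) := by
      intro a b hab w hw
      obtain ⟨hwp, hw1, hw2⟩ := hw
      obtain ⟨t, htl, hwt⟩ := Aux.mem_iff_getD.1 hwp
      have htn : t ≤ 2 * n := by rw [hlen a] at htl; omega
      have h5 : (w.1 + w.2 : ℤ) = (t : ℤ) := by
        have h := hlev a t htn
        rw [hwt] at h
        simpa [Aux.lev] using h
      have hcast : (w.1 : ℝ) + (w.2 : ℝ) = (t : ℝ) := by exact_mod_cast h5
      have h6 : t1 ≤ t := by
        have h : (t1 : ℝ) ≤ (t : ℝ) := by linarith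
        exact_mod_cast h
      have h7 : t ≤ t2 := by
        have h : (t : ℝ) ≤ (t2 : ℝ) := by linarith
        exact_mod_cast h
      have h9 : (p b).getD t Aux.z0 = w := by rw [← hab t h6 h7, hwt]
      exact ⟨Aux.mem_iff_getD.2 ⟨t, by rw [hlen b]; omega, h9⟩, hw1, hw2⟩
    ext w
    constructor
    · exact key i j hco w
    · exact key j i (fun t h1 h2 => (hco t h1 h2).symm) w
  have hLotrans : ∀ i j l : Fin k, i < j → j < l →
      (∀ t, t ≤ 2 * n → (t : ℝ) ≤ 2 * (n : ℝ) / 3 → X i t ≠ X j t) →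
      (∀ t, t ≤ 2 * n → (t : ℝ) ≤ 2 * (n : ℝ) / 3 → X j t ≠ X l t) →
      (∀ t, t ≤ 2 * n → (t : ℝ) ≤ 2 * (n : ℝ) / 3 → X i t ≠ X l t) := by
    intro i j l hij hjl hLij hLjl t htn htr heq
    rcases le_or_gt (X i t) (X j t) with hc | hc
    · obtain ⟨c, hc1, hc2, hc3⟩ := cross i j 0 t (Nat.zero_le _) htn
        (by have := hu_lt i j hij; have h0 := hX0 i; have h0' := hX0 j; omega) (by omega)
      exact hLij c (le_trans hc2 htn) (le_trans (Nat.cast_le.2 hc2) htr) hc3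
    · obtain ⟨c, hc1, hc2, hc3⟩ := cross j l 0 t (Nat.zero_le _) htn
        (by have := hu_lt j l hjl; omega) (by omega)
      exact hLjl c (le_trans hc2 htn) (le_trans (Nat.cast_le.2 hc2) htr) hc3
  obtain ⟨S, hSA, hScard, hSmono⟩ := Aux.two_trans Finset.univ
    (fun i j => (v i).1 < (v j).1) (fun i j => (v j).1 < (v i).1)
    (fun i j l _ _ _ _ _ h1 h2 => lt_trans h1 h2)
    (fun i j l _ _ _ _ _ h1 h2 => lt_trans h2 h1)
    (fun i j _ _ hij => lt_or_gt_of_ne (hv_ne i j (ne_of_lt hij)))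
  rw [Finset.card_univ, Fintype.card_fin] at hScard
  have hHitrans : ∀ i j l : Fin k, i ∈ S → j ∈ S → l ∈ S → i < j → j < l →
      (∀ t, t ≤ 2 * n → 4 * (n : ℝ) / 3 ≤ (t : ℝ) → X i t ≠ X j t) →
      (∀ t, t ≤ 2 * n → 4 * (n : ℝ) / 3 ≤ (t : ℝ) → X j t ≠ X l t) →
      (∀ t, t ≤ 2 * n → 4 * (n : ℝ) / 3 ≤ (t : ℝ) → X i t ≠ X l t) := by
    intro i j l hiS hjS hlS hij hjl hHij hHjl t htn htr heq
    have hcastc : ∀ c : ℕ, t ≤ c → 4 * (n : ℝ) / 3 ≤ (c : ℝ) :=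
      fun c hc => le_trans htr (Nat.cast_le.2 hc)
    have hvi := hX2n i
    have hvj := hX2n j
    have hvl := hX2n l
    rcases lt_trichotomy (X j t) (X i t) with hc | hc | hc
    · rcases hSmono with hmon | hmon
      · obtain ⟨c, hc1, hc2, hc3⟩ := cross i j t (2 * n) htn (le_refl _)
          (by omega) (by have := hmon i hiS j hjS hij; omega)
        exact hHij c hc2 (hcastc c hc1) hc3
      · obtain ⟨c, hc1, hc2, hc3⟩ := cross' j l t (2 * n) htn (le_refl _)
          (by omega) (by have := hmon j hjS l hlS hjl; omega)
        exact hHjl c hc2 (hcastc c hc1) hc3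
    · exact hHij t htn htr (by omega)
    · rcases hSmono with hmon | hmon
      · obtain ⟨c, hc1, hc2, hc3⟩ := cross j l t (2 * n) htn (le_refl _)
          (by omega) (by have := hmon j hjS l hlS hjl; omega)
        exact hHjl c hc2 (hcastc c hc1) hc3
      · obtain ⟨c, hc1, hc2, hc3⟩ := cross' i j t (2 * n) htn (le_refl _)
          (by omega) (by have := hmon i hiS j hjS hij; omega)
        exact hHij c hc2 (hcastc c hc1) hc3
  obtain ⟨I, hIS, hIcard, hIchain⟩ := Aux.two_trans S
    (fun i j => ∀ t, t ≤ 2 * n → (t : ℝ) ≤ 2 * (n : ℝ) / 3 → X i t ≠ X j t)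
    (fun i j => ∀ t, t ≤ 2 * n → 4 * (n : ℝ) / 3 ≤ (t : ℝ) → X i t ≠ X j t)
    (fun i j l _ _ _ hij hjl => hLotrans i j l hij hjl)
    (fun i j l hi hj hl hij hjl => hHitrans i j l hi hj hl hij hjl)
    (fun i j _ _ hij => hdich i j (ne_of_lt hij))
  refine ⟨I, ?_, ?_⟩
  · have hk4 : k ≤ I.card * I.card * (I.card * I.card) :=
      le_trans hScard (Nat.mul_le_mul hIcard hIcard)
    rcases Nat.eq_zero_or_pos I.card with h0 | h1
    · have hk0 : k = 0 := by rw [h0] at hk4; omega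
      have hcast0 : (k : ℝ) = 0 := by rw [hk0]; simp
      rw [hcast0, h0]
      simp [Real.zero_rpow (by norm_num : (1 : ℝ) / 8 ≠ 0)]
    · have h1R : (1 : ℝ) ≤ (I.card : ℝ) := by exact_mod_cast h1
      have hkR : (k : ℝ) ≤ (I.card : ℝ) ^ (4 : ℕ) := by
        have h : (k : ℝ) ≤ ((I.card * I.card * (I.card * I.card) : ℕ) : ℝ) := Nat.cast_le.2 hk4
        push_cast at h
        calc (k : ℝ) ≤ (I.card : ℝ) * (I.card : ℝ) * ((I.card : ℝ) * (I.card : ℝ)) := h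
          _ = (I.card : ℝ) ^ (4 : ℕ) := by ring
      have h8 : (k : ℝ) ^ ((1 : ℝ) / 8) ≤ ((I.card : ℝ) ^ (4 : ℕ)) ^ ((1 : ℝ) / 8) :=
        Real.rpow_le_rpow (Nat.cast_nonneg k) hkR (by norm_num)
      have h9 : ((I.card : ℝ) ^ (4 : ℕ)) ^ ((1 : ℝ) / 8) = (I.card : ℝ) ^ ((1 : ℝ) / 2) := by
        rw [← Real.rpow_natCast (I.card : ℝ) 4, ← Real.rpow_mul (Nat.cast_nonneg I.card)]
        norm_num
      have h10 : (I.card : ℝ) ^ ((1 : ℝ) / 2) ≤ (I.card : ℝ) ^ (1 : ℝ) :=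
        Real.rpow_le_rpow_of_exponent_le h1R (by norm_num)
      rw [Real.rpow_one] at h10
      calc (k : ℝ) ^ ((1 : ℝ) / 8) ≤ ((I.card : ℝ) ^ (4 : ℕ)) ^ ((1 : ℝ) / 8) := h8
        _ = (I.card : ℝ) ^ ((1 : ℝ) / 2) := h9
        _ ≤ (I.card : ℝ) := h10
  · rcases hIchain with hLo | hHi
    · refine ⟨(n : ℝ) / 3, 2 * (n : ℝ) / 3, Or.inr (Or.inl rfl), ?_⟩
      intro i hi j hj hne
      rw [Set.disjoint_left]
      intro w hwmem hwmem'
      obtain ⟨hwp, hw1, hw2⟩ := hwmem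
      obtain ⟨hwq, hw1', hw2'⟩ := hwmem'
      obtain ⟨t, htl, hwt⟩ := Aux.mem_iff_getD.1 hwp
      obtain ⟨s, hsl, hws⟩ := Aux.mem_iff_getD.1 hwq
      have htn : t ≤ 2 * n := by rw [hlen i] at htl; omega
      have hsn : s ≤ 2 * n := by rw [hlen j] at hsl; omega
      have h5 : (w.1 + w.2 : ℤ) = (t : ℤ) := by
        have h := hlev i t htn
        rw [hwt] at h
        simpa [Aux.lev] using h
      have h6 : (w.1 + w.2 : ℤ) = (s : ℤ) := by
        have h := hlev j s hsn
        rw [hws] at h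
        simpa [Aux.lev] using h
      have hts : s = t := by omega
      subst hts
      have hXts : X i s = X j s := by
        show ((p i).getD s Aux.z0).1 = ((p j).getD s Aux.z0).1
        rw [hwt, hws]
      have hcast : (w.1 : ℝ) + (w.2 : ℝ) = (s : ℝ) := by exact_mod_cast h6
      have htrR : (s : ℝ) ≤ 2 * (n : ℝ) / 3 := by rw [← hcast]; exact hw2
      rcases lt_or_gt_of_ne hne with h | h
      · exact hLo i hi j hj h s hsn htrR hXts
      · exact hLo j hj i hi h s hsn htrR hXts.symm
    · refine ⟨4 * (n : ℝ) / 3, 2 * (n : ℝ), Or.inr (Or.inr (Or.inr rfl)), ?_⟩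
      intro i hi j hj hne
      rw [Set.disjoint_left]
      intro w hwmem hwmem'
      obtain ⟨hwp, hw1, hw2⟩ := hwmem
      obtain ⟨hwq, hw1', hw2'⟩ := hwmem'
      obtain ⟨t, htl, hwt⟩ := Aux.mem_iff_getD.1 hwp
      obtain ⟨s, hsl, hws⟩ := Aux.mem_iff_getD.1 hwq
      have htn : t ≤ 2 * n := by rw [hlen i] at htl; omega
      have hsn : s ≤ 2 * n := by rw [hlen j] at hsl; omega
      have h5 : (w.1 + w.2 : ℤ) = (t : ℤ) := by
        have h := hlev i t htn
        rw [hwt] at h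
        simpa [Aux.lev] using h
      have h6 : (w.1 + w.2 : ℤ) = (s : ℤ) := by
        have h := hlev j s hsn
        rw [hws] at h
        simpa [Aux.lev] using h
      have hts : s = t := by omega
      subst hts
      have hXts : X i s = X j s := by
        show ((p i).getD s Aux.z0).1 = ((p j).getD s Aux.z0).1
        rw [hwt, hws]
      have hcast : (w.1 : ℝ) + (w.2 : ℝ) = (s : ℝ) := by exact_mod_cast h6
      have htrR : 4 * (n : ℝ) / 3 ≤ (s : ℝ) := by rw [← hcast]; exact hw1
      rcases lt_or_gt_of_ne hne with h | h
      · exact hHi i hi j hj h s hsn htrR hXts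
      · exact hHi j hj i hi h s hsn htrR hXts.symm

end LPP
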